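/- Let C be a cycle in the grid graph ℤ² whose interior contains at least two unit squares, and let J₀ be the square in the interior of C whose center (x₀,y₀) is lexicographically maximal (first maximizing y₀, then x₀). Then the top edge and the right edge of J₀ both belong to C, while at least one of the left or bottom edges of J₀ does not belong to C. -/

import Mathlib

open Set

/-- The closed unit square with lower-left corner `q` of the standard tiling. -/
def unitSquare (q : ℤ × ℤ) : Set (ℝ × ℝ) :=
  Icc (q.1 : ℝ) (q.1 + 1) ×ˢ Icc (q.2 : ℝ) (q.2 + 1)

/-- The open interior of the unit square `q`. -/
def openSquare (q : ℤ × ℤ) : Set (ℝ × ℝ) :=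
  Ioo (q.1 : ℝ) (q.1 + 1) ×ˢ Ioo (q.2 : ℝ) (q.2 + 1)

/-- The four corner points of the unit square `q`. -/
def cornerSet (q : ℤ × ℤ) : Set (ℝ × ℝ) :=
  {((q.1 : ℝ), (q.2 : ℝ)), ((q.1 : ℝ) + 1, (q.2 : ℝ)),
   ((q.1 : ℝ), (q.2 : ℝ) + 1), ((q.1 : ℝ) + 1, (q.2 : ℝ) + 1)}

/-- The four closed boundary edges of the unit square `q`, as subsets of `ℝ × ℝ`. -/
def squareEdgeSets (q : ℤ × ℤ) : Set (Set (ℝ × ℝ)) :=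
  { Icc (q.1 : ℝ) (q.1 + 1) ×ˢ ({(q.2 : ℝ)} : Set ℝ),
    Icc (q.1 : ℝ) (q.1 + 1) ×ˢ ({(q.2 : ℝ) + 1} : Set ℝ),
    ({(q.1 : ℝ)} : Set ℝ) ×ˢ Icc (q.2 : ℝ) (q.2 + 1),
    ({(q.1 : ℝ) + 1} : Set ℝ) ×ˢ Icc (q.2 : ℝ) (q.2 + 1) }

/-- Two distinct squares are star adjacent if they share a corner. -/
def StarAdj (p q : ℤ × ℤ) : Prop := p ≠ q ∧ (cornerSet p ∩ cornerSet q).Nonempty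

/-- Two distinct squares are plus adjacent if they share a full edge. -/
def PlusAdj (p q : ℤ × ℤ) : Prop := p ≠ q ∧ (squareEdgeSets p ∩ squareEdgeSets q).Nonempty

/-- The grid graph on `ℤ × ℤ`: edges between lattice points at distance 1. -/
def gridGraph : SimpleGraph (ℤ × ℤ) where
  Adj p q := |p.1 - q.1| + |p.2 - q.2| = 1
  symm := by
    constructor
    intro p q h
    show |q.1 - p.1| + |q.2 - p.2| = 1
    rw [abs_sub_comm q.1, abs_sub_comm q.2]
    exact h
  loopless := by
    constructor
    intro p h
    simp at h

/-- Embedding of lattice points into the plane. -/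
def toR (p : ℤ × ℤ) : ℝ × ℝ := ((p.1 : ℝ), (p.2 : ℝ))

/-- The subset of the plane traced out by a closed walk in the grid graph. -/
def cycleSet {v : ℤ × ℤ} (w : gridGraph.Walk v v) : Set (ℝ × ℝ) :=
  ⋃ d ∈ w.darts, segment ℝ (toR d.toProd.1) (toR d.toProd.2)

/-- The interior of a curve `Γ`: points off `Γ` whose connected component
of the complement is bounded. -/
def interiorPts (Γ : Set (ℝ × ℝ)) : Set (ℝ × ℝ) :=
  {x | x ∉ Γ ∧ Bornology.IsBounded (connectedComponentIn Γᶜ x)}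

/-- The exterior of a curve `Γ`: points off `Γ` whose connected component
of the complement is unbounded. -/
def exteriorPts (Γ : Set (ℝ × ℝ)) : Set (ℝ × ℝ) :=
  {x | x ∉ Γ ∧ ¬ Bornology.IsBounded (connectedComponentIn Γᶜ x)}

/-- A square lies in the interior of a curve if its open interior does. -/
def SquareInInterior (Γ : Set (ℝ × ℝ)) (q : ℤ × ℤ) : Prop := openSquare q ⊆ interiorPts Γ

/-- A square lies in the exterior of a curve if its open interior does. -/
def SquareInExterior (Γ : Set (ℝ × ℝ)) (q : ℤ × ℤ) : Prop := openSquare q ⊆ exteriorPts Γ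

/-- The four boundary edges of the square `q`, as edges (`Sym2`) of the grid graph. -/
def sqEdgeSyms (q : ℤ × ℤ) : Set (Sym2 (ℤ × ℤ)) :=
  { s((q.1, q.2), (q.1 + 1, q.2)),
    s((q.1, q.2), (q.1, q.2 + 1)),
    s((q.1 + 1, q.2), (q.1 + 1, q.2 + 1)),
    s((q.1, q.2 + 1), (q.1 + 1, q.2 + 1)) }

/-- A cycle in the graph `G₀` of edges of the squares of `Λ`. -/
def CycleInG0 (Λ : Set (ℤ × ℤ)) {v : ℤ × ℤ} (w : gridGraph.Walk v v) : Prop :=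
  w.IsCycle ∧ ∀ e ∈ w.edges, ∃ q ∈ Λ, e ∈ sqEdgeSyms q

/-- An outermost boundary edge of the component formed by the squares of `Λ`. -/
def OutermostBoundaryEdge (Λ : Set (ℤ × ℤ)) (e : Sym2 (ℤ × ℤ)) : Prop :=
  (∃ q ∈ Λ, e ∈ sqEdgeSyms q) ∧
  ∀ (v : ℤ × ℤ) (w : gridGraph.Walk v v), CycleInG0 Λ w →
    e ∈ w.edges ∨ ∀ q : ℤ × ℤ, e ∈ sqEdgeSyms q → SquareInExterior (cycleSet w) q

-- ==================== auxiliary lemmas ====================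

open SimpleGraph

/-- In a cycle, a vertex cannot have three distinct neighbors along cycle edges. -/
lemma three_edges_false {V : Type*} {G : SimpleGraph V} {v : V} {w : G.Walk v v}
    (hw : w.IsCycle) {u a b c : V} (ha : s(u, a) ∈ w.edges) (hb : s(u, b) ∈ w.edges)
    (hc : s(u, c) ∈ w.edges) (hab : a ≠ b) (hac : a ≠ c) (hbc : b ≠ c) : False := by
  classical
  -- dropLast of support is nodup
  have htne : w.support.tail ≠ [] := by
    have h3 := hw.three_le_length
    have h4 := w.length_support
    intro h
    rw [Walk.support_eq_cons, h] at h4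
    simp only [List.length_cons, List.length_nil] at h4
    omega
  have hlast : w.support.tail.getLast htne = v := by
    have hsne : w.support ≠ [] := w.support_ne_nil
    have h1 : w.support.getLast? = some v := by
      rw [List.getLast?_eq_getLast hsne, w.getLast_support]
    have h2 : w.support.getLast? = w.support.tail.getLast? := by
      obtain ⟨x, t', ht'⟩ := List.exists_cons_of_ne_nil htne
      rw [Walk.support_eq_cons, ht']
      simp [List.getLast?_cons_cons]
    rw [h2, List.getLast?_eq_getLast htne] at h1
    exact Option.some.inj h1
  have htailnodup : w.support.tail.Nodup := hw.support_nodup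
  have hdropnodup : w.support.dropLast.Nodup := by
    have heq : w.support.dropLast = v :: w.support.tail.dropLast := by
      conv_lhs => rw [Walk.support_eq_cons]
      exact List.dropLast_cons_of_ne_nil htne
    rw [heq, List.nodup_cons]
    constructor
    · -- v ∉ dropLast tail
      intro hv
      have h5 : w.support.tail.dropLast ++ [v] = w.support.tail := by
        conv_rhs => rw [← List.dropLast_append_getLast htne, hlast]
      have := htailnodup
      rw [← h5, List.nodup_append] at this
      exact this.2.2 v hv v (List.mem_singleton_self v) rfl
    · exact (List.dropLast_sublist _).nodup htailnodup
  have hfstnodup : (w.darts.map (fun d : G.Dart => d.toProd.1)).Nodup := by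
    rw [Walk.map_fst_darts]; exact hdropnodup
  have hsndnodup : (w.darts.map (fun d : G.Dart => d.toProd.2)).Nodup := by
    rw [Walk.map_snd_darts]; exact htailnodup
  -- pair lemmas
  have pairf : ∀ d ∈ w.darts, ∀ d' ∈ w.darts, d.toProd.1 = u → d'.toProd.1 = u →
      d.toProd.2 = d'.toProd.2 := by
    intro d hd d' hd' h h'
    rw [List.inj_on_of_nodup_map hfstnodup hd hd' (h.trans h'.symm)]
  have pairs : ∀ d ∈ w.darts, ∀ d' ∈ w.darts, d.toProd.2 = u → d'.toProd.2 = u →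
      d.toProd.1 = d'.toProd.1 := by
    intro d hd d' hd' h h'
    rw [List.inj_on_of_nodup_map hsndnodup hd hd' (h.trans h'.symm)]
  -- extract darts
  have extract : ∀ x : V, s(u, x) ∈ w.edges → ∃ d ∈ w.darts,
      (d.toProd.1 = u ∧ d.toProd.2 = x) ∨ (d.toProd.1 = x ∧ d.toProd.2 = u) := by
    intro x hx
    have : s(u, x) ∈ w.darts.map SimpleGraph.Dart.edge := hx
    obtain ⟨d, hd, hde⟩ := List.mem_map.mp this
    refine ⟨d, hd, ?_⟩
    have : s(d.toProd.1, d.toProd.2) = s(u, x) := hde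
    rw [Sym2.eq_iff] at this
    tauto
  obtain ⟨da, hda, hea⟩ := extract a ha
  obtain ⟨db, hdb, heb⟩ := extract b hb
  obtain ⟨dc, hdc, hec⟩ := extract c hc
  rcases hea with ⟨ha1, ha2⟩ | ⟨ha1, ha2⟩ <;>
    rcases heb with ⟨hb1, hb2⟩ | ⟨hb1, hb2⟩ <;>
      rcases hec with ⟨hc1, hc2⟩ | ⟨hc1, hc2⟩
  · exact hab ((ha2.symm.trans (pairf da hda db hdb ha1 hb1)).trans hb2)
  · exact hab ((ha2.symm.trans (pairf da hda db hdb ha1 hb1)).trans hb2)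
  · exact hac ((ha2.symm.trans (pairf da hda dc hdc ha1 hc1)).trans hc2)
  · exact hbc ((hb1.symm.trans (pairs db hdb dc hdc hb2 hc2)).trans hc1)
  · exact hbc ((hb2.symm.trans (pairf db hdb dc hdc hb1 hc1)).trans hc2)
  · exact hac ((ha1.symm.trans (pairs da hda dc hdc ha2 hc2)).trans hc1)
  · exact hab ((ha1.symm.trans (pairs da hda db hdb ha2 hb2)).trans hb1)
  · exact hab ((ha1.symm.trans (pairs da hda db hdb ha2 hb2)).trans hb1)

lemma not_int_of_mem_Ioo {n : ℤ} {y : ℝ} (h1 : (n : ℝ) < y) (h2 : y < n + 1) (k : ℤ) :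
    y ≠ (k : ℝ) := by
  rintro rfl
  have ha : n < k := by exact_mod_cast h1
  have hb : (k : ℝ) < ((n + 1 : ℤ) : ℝ) := by push_cast; linarith
  have : k < n + 1 := by exact_mod_cast hb
  omega

lemma dart_cases {d : gridGraph.Dart} :
    (d.toProd.1.1 = d.toProd.2.1 ∧
      (d.toProd.2.2 = d.toProd.1.2 + 1 ∨ d.toProd.1.2 = d.toProd.2.2 + 1)) ∨
    (d.toProd.1.2 = d.toProd.2.2 ∧
      (d.toProd.2.1 = d.toProd.1.1 + 1 ∨ d.toProd.1.1 = d.toProd.2.1 + 1)) := by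
  have h : |d.toProd.1.1 - d.toProd.2.1| + |d.toProd.1.2 - d.toProd.2.2| = 1 := d.adj
  rcases abs_cases (d.toProd.1.1 - d.toProd.2.1) with ⟨h1, _⟩ | ⟨h1, _⟩ <;>
    rcases abs_cases (d.toProd.1.2 - d.toProd.2.2) with ⟨h2, _⟩ | ⟨h2, _⟩ <;> omega

lemma mem_segment_coords {a b : ℤ × ℤ} {x : ℝ × ℝ} (hx : x ∈ segment ℝ (toR a) (toR b)) :
    ∃ t : ℝ, 0 ≤ t ∧ t ≤ 1 ∧ x.1 = (1 - t) * (a.1 : ℝ) + t * (b.1 : ℝ) ∧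
      x.2 = (1 - t) * (a.2 : ℝ) + t * (b.2 : ℝ) := by
  rw [segment_eq_image] at hx
  obtain ⟨t, ht, hx⟩ := hx
  refine ⟨t, ht.1, ht.2, ?_, ?_⟩ <;> rw [← hx] <;> simp [toR, smul_eq_mul]

lemma mem_cycleSet {v : ℤ × ℤ} {w : gridGraph.Walk v v} {x : ℝ × ℝ} :
    x ∈ cycleSet w ↔ ∃ d ∈ w.darts, x ∈ segment ℝ (toR d.toProd.1) (toR d.toProd.2) := by
  simp [cycleSet]

/-- A point of the cycle set whose `y`-coordinate is strictly between consecutive integers lies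
on a vertical unit edge of the cycle. -/
lemma cycleSet_vertical {v : ℤ × ℤ} {w : gridGraph.Walk v v} {x : ℝ × ℝ}
    (hx : x ∈ cycleSet w) {b : ℤ} (hy1 : (b : ℝ) < x.2) (hy2 : x.2 < (b : ℝ) + 1) :
    ∃ m : ℤ, x.1 = (m : ℝ) ∧ s(((m : ℤ), b), ((m : ℤ), b + 1)) ∈ w.edges := by
  obtain ⟨d, hd, hseg⟩ := mem_cycleSet.mp hx
  obtain ⟨t, ht0, ht1, hx1, hx2⟩ := mem_segment_coords hseg
  have hedge : d.edge ∈ w.edges := List.mem_map_of_mem (f := SimpleGraph.Dart.edge) hd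
  set p := d.toProd.1 with hp
  set q := d.toProd.2 with hq
  rcases dart_cases (d := d) with ⟨hv, hud⟩ | ⟨hh, _⟩
  · -- vertical dart
    have hv2 : p.1 = q.1 := hv
    refine ⟨p.1, by rw [hx1, ← hv]; ring, ?_⟩
    rcases hud with hu | hdn
    · -- q.2 = p.2 + 1
      have hu2 : q.2 = p.2 + 1 := hu
      have hx2' : x.2 = (p.2 : ℝ) + t := by rw [hx2, hu]; push_cast; ring
      have hb : p.2 = b := by
        have c1 : (p.2 : ℝ) < (b : ℝ) + 1 := by linarith
        have c2 : (b : ℝ) < (p.2 : ℝ) + 1 := by linarith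
        have c1' : p.2 < b + 1 := by exact_mod_cast c1
        have c2' : b < p.2 + 1 := by exact_mod_cast c2
        omega
      have : d.edge = s((p.1, b), (p.1, b + 1)) := by
        show s(p, q) = _
        rw [Sym2.eq_iff]
        left
        constructor <;> rw [Prod.ext_iff] <;> constructor <;> simp <;> omega
      rwa [this] at hedge
    · -- p.2 = q.2 + 1
      have hdn2 : p.2 = q.2 + 1 := hdn
      have hx2' : x.2 = (q.2 : ℝ) + (1 - t) := by rw [hx2, hdn]; push_cast; ring
      have hb : q.2 = b := by
        have c1 : (q.2 : ℝ) < (b : ℝ) + 1 := by linarith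
        have c2 : (b : ℝ) < (q.2 : ℝ) + 1 := by linarith
        have c1' : q.2 < b + 1 := by exact_mod_cast c1
        have c2' : b < q.2 + 1 := by exact_mod_cast c2
        omega
      have : d.edge = s((p.1, b), (p.1, b + 1)) := by
        show s(p, q) = _
        rw [Sym2.eq_iff]
        right
        constructor <;> rw [Prod.ext_iff] <;> constructor <;> simp <;> omega
      rwa [this] at hedge
  · -- horizontal dart: impossible
    exfalso
    have : x.2 = (p.2 : ℝ) := by rw [hx2, ← hh]; ring
    exact not_int_of_mem_Ioo hy1 hy2 p.2 this

/-- A point of the cycle set whose `x`-coordinate is strictly between consecutive integers lies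
on a horizontal unit edge of the cycle. -/
lemma cycleSet_horizontal {v : ℤ × ℤ} {w : gridGraph.Walk v v} {x : ℝ × ℝ}
    (hx : x ∈ cycleSet w) {a : ℤ} (hy1 : (a : ℝ) < x.1) (hy2 : x.1 < (a : ℝ) + 1) :
    ∃ m : ℤ, x.2 = (m : ℝ) ∧ s((a, (m : ℤ)), (a + 1, (m : ℤ))) ∈ w.edges := by
  obtain ⟨d, hd, hseg⟩ := mem_cycleSet.mp hx
  obtain ⟨t, ht0, ht1, hx1, hx2⟩ := mem_segment_coords hseg
  have hedge : d.edge ∈ w.edges := List.mem_map_of_mem (f := SimpleGraph.Dart.edge) hd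
  set p := d.toProd.1 with hp
  set q := d.toProd.2 with hq
  rcases dart_cases (d := d) with ⟨hv, _⟩ | ⟨hh, hud⟩
  · -- vertical dart: impossible
    exfalso
    have : x.1 = (p.1 : ℝ) := by rw [hx1, ← hv]; ring
    exact not_int_of_mem_Ioo hy1 hy2 p.1 this
  · -- horizontal dart
    have hh2 : p.2 = q.2 := hh
    refine ⟨p.2, by rw [hx2, ← hh]; ring, ?_⟩
    rcases hud with hu | hdn
    · have hu2 : q.1 = p.1 + 1 := hu
      have hx1' : x.1 = (p.1 : ℝ) + t := by rw [hx1, hu]; push_cast; ring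
      have hb : p.1 = a := by
        have c1 : (p.1 : ℝ) < (a : ℝ) + 1 := by linarith
        have c2 : (a : ℝ) < (p.1 : ℝ) + 1 := by linarith
        have c1' : p.1 < a + 1 := by exact_mod_cast c1
        have c2' : a < p.1 + 1 := by exact_mod_cast c2
        omega
      have : d.edge = s((a, p.2), (a + 1, p.2)) := by
        show s(p, q) = _
        rw [Sym2.eq_iff]
        left
        constructor <;> rw [Prod.ext_iff] <;> constructor <;> simp <;> omega
      rwa [this] at hedge
    · have hdn2 : p.1 = q.1 + 1 := hdn
      have hx1' : x.1 = (q.1 : ℝ) + (1 - t) := by rw [hx1, hdn]; push_cast; ring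
      have hb : q.1 = a := by
        have c1 : (q.1 : ℝ) < (a : ℝ) + 1 := by linarith
        have c2 : (a : ℝ) < (q.1 : ℝ) + 1 := by linarith
        have c1' : q.1 < a + 1 := by exact_mod_cast c1
        have c2' : a < q.1 + 1 := by exact_mod_cast c2
        omega
      have : d.edge = s((a, p.2), (a + 1, p.2)) := by
        show s(p, q) = _
        rw [Sym2.eq_iff]
        right
        constructor <;> rw [Prod.ext_iff] <;> constructor <;> simp <;> omega
      rwa [this] at hedge

/-- Open squares avoid the cycle set. -/
lemma openSquare_disjoint {v : ℤ × ℤ} {w : gridGraph.Walk v v} (q : ℤ × ℤ) :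
    openSquare q ∩ cycleSet w = ∅ := by
  ext x
  simp only [Set.mem_inter_iff, Set.mem_empty_iff_false, iff_false, not_and]
  intro hx hΓ
  obtain ⟨hx1, hx2⟩ := hx
  obtain ⟨m, hm, _⟩ := cycleSet_horizontal hΓ hx1.1 hx1.2
  exact not_int_of_mem_Ioo hx2.1 hx2.2 m hm

/-- If the top edge of `q` is not in the cycle, the vertical domino (q and the square above)
avoids the cycle set. -/
lemma vert_domino_disjoint {v : ℤ × ℤ} {w : gridGraph.Walk v v} (q : ℤ × ℤ)
    (htop : s((q.1, q.2 + 1), (q.1 + 1, q.2 + 1)) ∉ w.edges) :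
    (Ioo (q.1 : ℝ) (q.1 + 1) ×ˢ Ioo (q.2 : ℝ) (q.2 + 2)) ∩ cycleSet w = ∅ := by
  ext x
  simp only [Set.mem_inter_iff, Set.mem_empty_iff_false, iff_false, not_and]
  intro hx hΓ
  obtain ⟨hx1, hx2⟩ := hx
  obtain ⟨m, hm, hedge⟩ := cycleSet_horizontal hΓ hx1.1 hx1.2
  have c1 : q.2 < m := by
    have : (q.2 : ℝ) < m := by rw [← hm]; exact hx2.1
    exact_mod_cast this
  have c2 : m < q.2 + 2 := by
    have : (m : ℝ) < (q.2 : ℝ) + 2 := by rw [← hm]; exact hx2.2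
    have h2 : (m : ℝ) < ((q.2 + 2 : ℤ) : ℝ) := by push_cast; linarith
    exact_mod_cast h2
  have : m = q.2 + 1 := by omega
  rw [this] at hedge
  exact htop hedge

/-- If the right edge of `q` is not in the cycle, the horizontal domino avoids the cycle set. -/
lemma horiz_domino_disjoint {v : ℤ × ℤ} {w : gridGraph.Walk v v} (q : ℤ × ℤ)
    (hright : s((q.1 + 1, q.2), (q.1 + 1, q.2 + 1)) ∉ w.edges) :
    (Ioo (q.1 : ℝ) (q.1 + 2) ×ˢ Ioo (q.2 : ℝ) (q.2 + 1)) ∩ cycleSet w = ∅ := by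
  ext x
  simp only [Set.mem_inter_iff, Set.mem_empty_iff_false, iff_false, not_and]
  intro hx hΓ
  obtain ⟨hx1, hx2⟩ := hx
  obtain ⟨m, hm, hedge⟩ := cycleSet_vertical hΓ hx2.1 hx2.2
  have c1 : q.1 < m := by
    have : (q.1 : ℝ) < m := by rw [← hm]; exact hx1.1
    exact_mod_cast this
  have c2 : m < q.1 + 2 := by
    have : (m : ℝ) < (q.1 : ℝ) + 2 := by rw [← hm]; exact hx1.2
    have h2 : (m : ℝ) < ((q.1 + 2 : ℤ) : ℝ) := by push_cast; linarith
    exact_mod_cast h2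
  have : m = q.1 + 1 := by omega
  rw [this] at hedge
  exact hright hedge

/-- Transfer interiority along a convex set avoiding the curve. -/
lemma interior_transfer {Γ D : Set (ℝ × ℝ)} (hD : Convex ℝ D) (hdisj : D ∩ Γ = ∅)
    {x y : ℝ × ℝ} (hx : x ∈ D) (hy : y ∈ D) (hxi : x ∈ interiorPts Γ) :
    y ∈ interiorPts Γ := by
  have hsub : D ⊆ Γᶜ := by
    intro z hz hzΓ
    have : z ∈ D ∩ Γ := ⟨hz, hzΓ⟩
    rw [hdisj] at this
    exact this
  have h1 : D ⊆ connectedComponentIn Γᶜ x :=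
    hD.isPreconnected.subset_connectedComponentIn hx hsub
  have h2 : connectedComponentIn Γᶜ x = connectedComponentIn Γᶜ y :=
    connectedComponentIn_eq (h1 hy)
  exact ⟨hsub hy, h2 ▸ hxi.2⟩

/-- The center of square `q`. -/
noncomputable def ctr (q : ℤ × ℤ) : ℝ × ℝ := ((q.1 : ℝ) + 2⁻¹, (q.2 : ℝ) + 2⁻¹)

lemma ctr_mem_openSquare (q : ℤ × ℤ) : ctr q ∈ openSquare q := by
  constructor <;> constructor <;> simp [ctr] <;> norm_num

/-- If the center of `q` is interior, the whole square is interior. -/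
lemma squareInInterior_of_ctr {v : ℤ × ℤ} {w : gridGraph.Walk v v} {q : ℤ × ℤ}
    (h : ctr q ∈ interiorPts (cycleSet w)) : SquareInInterior (cycleSet w) q := by
  intro z hz
  exact interior_transfer ((convex_Ioo _ _).prod (convex_Ioo _ _)) (openSquare_disjoint q)
    (ctr_mem_openSquare q) hz h

lemma part3 {v : ℤ × ℤ} {w : gridGraph.Walk v v} (hw : w.IsCycle) (q₀ : ℤ × ℤ)
    (htop : s((q₀.1, q₀.2 + 1), (q₀.1 + 1, q₀.2 + 1)) ∈ w.edges)
    (hright : s((q₀.1 + 1, q₀.2), (q₀.1 + 1, q₀.2 + 1)) ∈ w.edges)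
    (hleft : s((q₀.1, q₀.2), (q₀.1, q₀.2 + 1)) ∈ w.edges)
    (hbot : s((q₀.1, q₀.2), (q₀.1 + 1, q₀.2)) ∈ w.edges)
    {q : ℤ × ℤ} (hqne : q ≠ q₀) (hq : SquareInInterior (cycleSet w) q) : False := by
  classical
  set A : ℤ × ℤ := (q₀.1, q₀.2) with hA
  set B : ℤ × ℤ := (q₀.1 + 1, q₀.2) with hB
  set C : ℤ × ℤ := (q₀.1, q₀.2 + 1) with hC
  set D : ℤ × ℤ := (q₀.1 + 1, q₀.2 + 1) with hD
  have hbot' : s(B, A) ∈ w.edges := by rwa [Sym2.eq_swap] at hbot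
  have hleft' : s(C, A) ∈ w.edges := by rwa [Sym2.eq_swap] at hleft
  have hright' : s(D, B) ∈ w.edges := by rwa [Sym2.eq_swap] at hright
  have htop' : s(D, C) ∈ w.edges := by rwa [Sym2.eq_swap] at htop
  have hAB : A ≠ B := by simp only [hA, hB, ne_eq, Prod.mk.injEq]; omega
  have hAC : A ≠ C := by simp only [hA, hC, ne_eq, Prod.mk.injEq]; omega
  have hAD : A ≠ D := by simp only [hA, hD, ne_eq, Prod.mk.injEq]; omega
  have hBC : B ≠ C := by simp only [hB, hC, ne_eq, Prod.mk.injEq]; omega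
  have hBD : B ≠ D := by simp only [hB, hD, ne_eq, Prod.mk.injEq]; omega
  have hCD : C ≠ D := by simp only [hC, hD, ne_eq, Prod.mk.injEq]; omega
  set P : ℤ × ℤ → Prop := fun x => x = A ∨ x = B ∨ x = C ∨ x = D with hP
  have hstep : ∀ x y : ℤ × ℤ, P x → s(x, y) ∈ w.edges → P y := by
    intro x y hx he
    rcases hx with rfl | rfl | rfl | rfl
    · have : y = B ∨ y = C := by
        by_contra hcon
        push_neg at hcon
        exact three_edges_false hw hbot hleft he hBC (Ne.symm hcon.1) (Ne.symm hcon.2)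
      rcases this with rfl | rfl
      · exact Or.inr (Or.inl rfl)
      · exact Or.inr (Or.inr (Or.inl rfl))
    · have : y = A ∨ y = D := by
        by_contra hcon
        push_neg at hcon
        exact three_edges_false hw hbot' hright he hAD (Ne.symm hcon.1) (Ne.symm hcon.2)
      rcases this with rfl | rfl
      · exact Or.inl rfl
      · exact Or.inr (Or.inr (Or.inr rfl))
    · have : y = A ∨ y = D := by
        by_contra hcon
        push_neg at hcon
        exact three_edges_false hw hleft' htop he hAD (Ne.symm hcon.1) (Ne.symm hcon.2)
      rcases this with rfl | rfl
      · exact Or.inl rfl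
      · exact Or.inr (Or.inr (Or.inr rfl))
    · have : y = B ∨ y = C := by
        by_contra hcon
        push_neg at hcon
        exact three_edges_false hw hright' htop' he hBC (Ne.symm hcon.1) (Ne.symm hcon.2)
      rcases this with rfl | rfl
      · exact Or.inr (Or.inl rfl)
      · exact Or.inr (Or.inr (Or.inl rfl))
  have key : ∀ (a b : w.toSubgraph.verts) (p : w.toSubgraph.coe.Walk a b),
      P a.val → P b.val := by
    intro a b p
    induction p with
    | nil => exact id
    | cons h p ih =>
      intro hx
      apply ih
      refine hstep _ _ hx ?_
      have hadj : w.toSubgraph.Adj _ _ := h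
      exact (w.mem_edges_toSubgraph).mp (SimpleGraph.Subgraph.mem_edgeSet.mpr hadj)
  have hsupp : ∀ u ∈ w.support, P u := by
    intro u hu
    have hAs : A ∈ w.support := SimpleGraph.Walk.fst_mem_support_of_mem_edges w hbot
    obtain ⟨p⟩ := (w.toSubgraph_connected).preconnected
      ⟨A, (w.mem_verts_toSubgraph).mpr hAs⟩ ⟨u, (w.mem_verts_toSubgraph).mpr hu⟩
    exact key _ _ p (Or.inl rfl)
  -- the cycle set is contained in the closed unit square q₀
  have hcorner : ∀ p : ℤ × ℤ, P p → toR p ∈ unitSquare q₀ := by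
    intro p hp
    rcases hp with rfl | rfl | rfl | rfl <;>
      refine ⟨⟨?_, ?_⟩, ?_, ?_⟩ <;> simp [toR, hA, hB, hC, hD] <;> push_cast <;> linarith
  have hconv : Convex ℝ (unitSquare q₀) := (convex_Icc _ _).prod (convex_Icc _ _)
  have hΓsub : cycleSet w ⊆ unitSquare q₀ := by
    intro x hx
    obtain ⟨d, hd, hseg⟩ := mem_cycleSet.mp hx
    exact hconv.segment_subset
      (hcorner _ (hsupp _ (w.dart_fst_mem_support_of_mem_darts hd)))
      (hcorner _ (hsupp _ (w.dart_snd_mem_support_of_mem_darts hd))) hseg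
  -- the other interior square q gives a contradiction via an unbounded ray
  set z : ℝ × ℝ := ctr q with hz
  have hzint : z ∈ interiorPts (cycleSet w) := hq (ctr_mem_openSquare q)
  set c₀ : ℝ × ℝ := ctr q₀ with hc₀def
  have hc₀mem : c₀ ∈ unitSquare q₀ := by
    refine ⟨⟨?_, ?_⟩, ?_, ?_⟩ <;> simp [hc₀def, ctr] <;> norm_num
  have hzns : z ∉ unitSquare q₀ := by
    intro hzs
    apply hqne
    obtain ⟨⟨ha1, ha2⟩, hb1, hb2⟩ := hzs
    simp only [hz, ctr] at ha1 ha2 hb1 hb2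
    have e1 : q₀.1 ≤ q.1 := by
      have : (q₀.1 : ℝ) < (q.1 : ℝ) + 1 := by linarith
      have : q₀.1 < q.1 + 1 := by exact_mod_cast this
      omega
    have e2 : q.1 ≤ q₀.1 := by
      have : (q.1 : ℝ) < (q₀.1 : ℝ) + 1 := by linarith
      have : q.1 < q₀.1 + 1 := by exact_mod_cast this
      omega
    have e3 : q₀.2 ≤ q.2 := by
      have : (q₀.2 : ℝ) < (q.2 : ℝ) + 1 := by linarith
      have : q₀.2 < q.2 + 1 := by exact_mod_cast this
      omega
    have e4 : q.2 ≤ q₀.2 := by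
      have : (q.2 : ℝ) < (q₀.2 : ℝ) + 1 := by linarith
      have : q.2 < q₀.2 + 1 := by exact_mod_cast this
      omega
    have : q.1 = q₀.1 := le_antisymm e2 e1
    have : q.2 = q₀.2 := le_antisymm e4 e3
    rw [Prod.ext_iff]
    omega
  -- the ray from the center of q₀ through z
  set f : ℝ → ℝ × ℝ := fun t => z + t • (z - c₀) with hf
  have hrayout : ∀ t : ℝ, 0 ≤ t → f t ∉ unitSquare q₀ := by
    intro t ht hmem
    apply hzns
    have h1t : (0 : ℝ) < 1 + t := by linarith
    have hcomb : z = (1 / (1 + t)) • f t + (t / (1 + t)) • c₀ := by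
      simp only [hf, smul_add, smul_sub, smul_smul]
      rw [Prod.ext_iff]
      constructor <;> simp [Prod.smul_def, smul_eq_mul] <;> field_simp <;> ring
    rw [hcomb]
    exact hconv hmem hc₀mem (by positivity) (by positivity) (by field_simp)
  have hraysub : f '' Set.Ici 0 ⊆ (cycleSet w)ᶜ := by
    rintro p ⟨t, ht, rfl⟩ hpΓ
    exact hrayout t ht (hΓsub hpΓ)
  have hraypre : IsPreconnected (f '' Set.Ici 0) := by
    apply isPreconnected_Ici.image
    apply Continuous.continuousOn
    exact continuous_const.add (continuous_id.smul continuous_const)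
  have hz0 : z ∈ f '' Set.Ici 0 := ⟨0, Set.self_mem_Ici, by simp [hf]⟩
  have hraycc : f '' Set.Ici 0 ⊆ connectedComponentIn (cycleSet w)ᶜ z :=
    hraypre.subset_connectedComponentIn hz0 hraysub
  have hbd : Bornology.IsBounded (f '' Set.Ici 0) := hzint.2.subset hraycc
  rw [isBounded_iff_forall_norm_le] at hbd
  obtain ⟨M, hM⟩ := hbd
  have hw0 : z - c₀ ≠ 0 := sub_ne_zero.mpr (fun h => hzns (h ▸ hc₀mem))
  have hw0n : (0 : ℝ) < ‖z - c₀‖ := norm_pos_iff.mpr hw0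
  have hM0 : ‖z‖ ≤ M := by simpa [hf] using hM z hz0
  set T : ℝ := (M + ‖z‖ + 1) / ‖z - c₀‖ with hT
  have hTnn : 0 ≤ T := by
    apply div_nonneg _ hw0n.le
    have : (0:ℝ) ≤ ‖z‖ := norm_nonneg _
    linarith
  have hMT := hM (f T) ⟨T, hTnn, rfl⟩
  have hnorm1 : ‖T • (z - c₀)‖ ≤ ‖f T‖ + ‖z‖ := by
    have : T • (z - c₀) = f T - z := by simp [hf]
    rw [this]
    exact norm_sub_le _ _
  have hnorm2 : ‖T • (z - c₀)‖ = M + ‖z‖ + 1 := by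
    rw [norm_smul, Real.norm_of_nonneg hTnn, hT, div_mul_cancel₀ _ (ne_of_gt hw0n)]
  linarith

theorem top_right_edges_of_lex_max_square (v : ℤ × ℤ) (w : gridGraph.Walk v v)
    (hw : w.IsCycle) (q₀ : ℤ × ℤ) (hq₀ : SquareInInterior (cycleSet w) q₀)
    (hmax : ∀ q : ℤ × ℤ, SquareInInterior (cycleSet w) q → q ≠ q₀ →
      q.2 < q₀.2 ∨ (q.2 = q₀.2 ∧ q.1 < q₀.1))
    (htwo : ∃ q : ℤ × ℤ, q ≠ q₀ ∧ SquareInInterior (cycleSet w) q) :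
    s((q₀.1, q₀.2 + 1), (q₀.1 + 1, q₀.2 + 1)) ∈ w.edges ∧
    s((q₀.1 + 1, q₀.2), (q₀.1 + 1, q₀.2 + 1)) ∈ w.edges ∧
    (s((q₀.1, q₀.2), (q₀.1, q₀.2 + 1)) ∉ w.edges ∨
     s((q₀.1, q₀.2), (q₀.1 + 1, q₀.2)) ∉ w.edges) := by
  have hc₀ : ctr q₀ ∈ interiorPts (cycleSet w) := hq₀ (ctr_mem_openSquare q₀)
  have htop : s((q₀.1, q₀.2 + 1), (q₀.1 + 1, q₀.2 + 1)) ∈ w.edges := by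
    by_contra htop
    have hdisj := vert_domino_disjoint q₀ htop
    have hDconv : Convex ℝ (Ioo (q₀.1 : ℝ) (q₀.1 + 1) ×ˢ Ioo (q₀.2 : ℝ) (q₀.2 + 2)) :=
      (convex_Ioo _ _).prod (convex_Ioo _ _)
    have hcmem : ctr q₀ ∈ Ioo (q₀.1 : ℝ) (q₀.1 + 1) ×ˢ Ioo (q₀.2 : ℝ) (q₀.2 + 2) := by
      constructor <;> constructor <;> simp [ctr] <;> norm_num
    have hcmem' : ctr (q₀.1, q₀.2 + 1) ∈
        Ioo (q₀.1 : ℝ) (q₀.1 + 1) ×ˢ Ioo (q₀.2 : ℝ) (q₀.2 + 2) := by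
      constructor <;> constructor <;> simp [ctr] <;> push_cast <;> linarith
    have hc' : ctr (q₀.1, q₀.2 + 1) ∈ interiorPts (cycleSet w) :=
      interior_transfer hDconv hdisj hcmem hcmem' hc₀
    have hSI : SquareInInterior (cycleSet w) (q₀.1, q₀.2 + 1) := squareInInterior_of_ctr hc'
    have hne : (q₀.1, q₀.2 + 1) ≠ q₀ := by
      intro h
      have h2 := congrArg Prod.snd h
      omega
    have := hmax _ hSI hne
    omega
  have hright : s((q₀.1 + 1, q₀.2), (q₀.1 + 1, q₀.2 + 1)) ∈ w.edges := by
    by_contra hright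
    have hdisj := horiz_domino_disjoint q₀ hright
    have hDconv : Convex ℝ (Ioo (q₀.1 : ℝ) (q₀.1 + 2) ×ˢ Ioo (q₀.2 : ℝ) (q₀.2 + 1)) :=
      (convex_Ioo _ _).prod (convex_Ioo _ _)
    have hcmem : ctr q₀ ∈ Ioo (q₀.1 : ℝ) (q₀.1 + 2) ×ˢ Ioo (q₀.2 : ℝ) (q₀.2 + 1) := by
      constructor <;> constructor <;> simp [ctr] <;> norm_num
    have hcmem' : ctr (q₀.1 + 1, q₀.2) ∈
        Ioo (q₀.1 : ℝ) (q₀.1 + 2) ×ˢ Ioo (q₀.2 : ℝ) (q₀.2 + 1) := by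
      constructor <;> constructor <;> simp [ctr] <;> push_cast <;> linarith
    have hc' : ctr (q₀.1 + 1, q₀.2) ∈ interiorPts (cycleSet w) :=
      interior_transfer hDconv hdisj hcmem hcmem' hc₀
    have hSI : SquareInInterior (cycleSet w) (q₀.1 + 1, q₀.2) := squareInInterior_of_ctr hc'
    have hne : (q₀.1 + 1, q₀.2) ≠ q₀ := by
      intro h
      have h2 := congrArg Prod.fst h
      omega
    have := hmax _ hSI hne
    omega
  refine ⟨htop, hright, ?_⟩
  by_contra hcon
  push_neg at hcon
  obtain ⟨q, hqne, hq⟩ := htwo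
  exact part3 hw q₀ htop hright hcon.1 hcon.2 hqne hq
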